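/- For every real p×m matrix Y (p, m ≥ 1) and every real α > 0, writing A = tr((Y Yᵀ + α I_p)⁻¹) and B = tr((Yᵀ Y + α I_m)⁻¹), one has (m − p)·A + α·A² = (p − m)·B + α·B². -/

import Mathlib

open Matrix

/-- For every real `p × m` matrix `Y` and every `α > 0`, writing
`A = tr((Y Yᵀ + α I_p)⁻¹)` and `B = tr((Yᵀ Y + α I_m)⁻¹)`, one has
`(m − p)·A + α·A² = (p − m)·B + α·B²`. -/
theorem trace_ridge_inverse_identity (p m : ℕ) (hp : 1 ≤ p) (hm : 1 ≤ m)
    (Y : Matrix (Fin p) (Fin m) ℝ) (α : ℝ) (hα : 0 < α) :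
    ((m : ℝ) - p) * ((Y * Yᵀ + α • (1 : Matrix (Fin p) (Fin p) ℝ))⁻¹).trace
        + α * (((Y * Yᵀ + α • (1 : Matrix (Fin p) (Fin p) ℝ))⁻¹).trace) ^ 2
      = ((p : ℝ) - m) * ((Yᵀ * Y + α • (1 : Matrix (Fin m) (Fin m) ℝ))⁻¹).trace
        + α * (((Yᵀ * Y + α • (1 : Matrix (Fin m) (Fin m) ℝ))⁻¹).trace) ^ 2 := by
  set M : Matrix (Fin p) (Fin p) ℝ := Y * Yᵀ + α • 1 with hMdef
  set N : Matrix (Fin m) (Fin m) ℝ := Yᵀ * Y + α • 1 with hNdef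
  have hsmulP : ∀ (n : ℕ), (α • (1 : Matrix (Fin n) (Fin n) ℝ)).PosDef := by
    intro n
    have h : α • (1 : Matrix (Fin n) (Fin n) ℝ) = Matrix.diagonal (fun _ => α) := by
      ext i j; by_cases hij : i = j <;> simp [hij, Matrix.one_apply, Matrix.diagonal]
    rw [h]
    exact Matrix.posDef_diagonal_iff.mpr fun _ => hα
  have hYYt : (Y * Yᵀ).PosSemidef := by
    have := Matrix.posSemidef_self_mul_conjTranspose Y
    rwa [Matrix.conjTranspose_eq_transpose_of_trivial] at this
  have hYtY : (Yᵀ * Y).PosSemidef := by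
    have := Matrix.posSemidef_conjTranspose_mul_self Y
    rwa [Matrix.conjTranspose_eq_transpose_of_trivial] at this
  have hM : M.PosDef := Matrix.PosDef.posSemidef_add hYYt (hsmulP p)
  have hN : N.PosDef := Matrix.PosDef.posSemidef_add hYtY (hsmulP m)
  have hMdet : IsUnit M.det := isUnit_iff_ne_zero.mpr hM.det_pos.ne'
  have hNdet : IsUnit N.det := isUnit_iff_ne_zero.mpr hN.det_pos.ne'
  have hMY : M * Y = Y * N := by
    rw [hMdef, hNdef, Matrix.add_mul, Matrix.mul_add, Matrix.smul_mul, Matrix.one_mul,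
      Matrix.mul_smul, Matrix.mul_one, Matrix.mul_assoc]
  have hswap : M⁻¹ * Y = Y * N⁻¹ := by
    calc M⁻¹ * Y = M⁻¹ * Y * (N * N⁻¹) := by
          rw [Matrix.mul_nonsing_inv N hNdet, Matrix.mul_one]
      _ = M⁻¹ * (Y * N) * N⁻¹ := by rw [Matrix.mul_assoc, Matrix.mul_assoc, Matrix.mul_assoc]
      _ = M⁻¹ * (M * Y) * N⁻¹ := by rw [hMY]
      _ = Y * N⁻¹ := by
          rw [← Matrix.mul_assoc, Matrix.nonsing_inv_mul M hMdet, Matrix.one_mul]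
  set A : ℝ := M⁻¹.trace with hA
  set B : ℝ := N⁻¹.trace with hB
  have hMtr : (M⁻¹ * (Y * Yᵀ)).trace = (p : ℝ) - α * A := by
    have h1 : M⁻¹ * (Y * Yᵀ) = 1 - α • M⁻¹ := by
      have : M⁻¹ * M = 1 := Matrix.nonsing_inv_mul M hMdet
      calc M⁻¹ * (Y * Yᵀ) = M⁻¹ * (M - α • 1) := by rw [hMdef]; congr 1; abel
        _ = M⁻¹ * M - α • M⁻¹ := by
            rw [Matrix.mul_sub, Matrix.mul_smul, Matrix.mul_one]
        _ = 1 - α • M⁻¹ := by rw [this]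
    rw [h1, Matrix.trace_sub, Matrix.trace_smul, Matrix.trace_one]
    simp [smul_eq_mul, hA]
  have hNtr : (N⁻¹ * (Yᵀ * Y)).trace = (m : ℝ) - α * B := by
    have h1 : N⁻¹ * (Yᵀ * Y) = 1 - α • N⁻¹ := by
      have : N⁻¹ * N = 1 := Matrix.nonsing_inv_mul N hNdet
      calc N⁻¹ * (Yᵀ * Y) = N⁻¹ * (N - α • 1) := by rw [hNdef]; congr 1; abel
        _ = N⁻¹ * N - α • N⁻¹ := by
            rw [Matrix.mul_sub, Matrix.mul_smul, Matrix.mul_one]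
        _ = 1 - α • N⁻¹ := by rw [this]
    rw [h1, Matrix.trace_sub, Matrix.trace_smul, Matrix.trace_one]
    simp [smul_eq_mul, hB]
  have heq : (M⁻¹ * (Y * Yᵀ)).trace = (N⁻¹ * (Yᵀ * Y)).trace := by
    calc (M⁻¹ * (Y * Yᵀ)).trace = (M⁻¹ * Y * Yᵀ).trace := by rw [Matrix.mul_assoc]
      _ = (Yᵀ * (M⁻¹ * Y)).trace := by rw [Matrix.trace_mul_comm]
      _ = (Yᵀ * (Y * N⁻¹)).trace := by rw [hswap]
      _ = (Yᵀ * Y * N⁻¹).trace := by rw [Matrix.mul_assoc]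
      _ = (N⁻¹ * (Yᵀ * Y)).trace := by rw [Matrix.trace_mul_comm]
  have hkey : α * B - α * A = (m : ℝ) - p := by
    rw [hMtr, hNtr] at heq; linarith
  linear_combination (-(A + B)) * hkey
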